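/- Let E be a nonempty closed proper subset of [0,1] and let f : E → [0,1] be a continuous function with the property that for every measurable set A ⊆ E, λ(A) = 0 if and only if λ(f(A)) = 0, where λ denotes Lebesgue measure and f(A) denotes the image of A under f. Then there exists a continuous function F : [0,1] → [0,1] such that F restricted to E equals f, and for every measurable set A ⊆ [0,1], λ(A) = 0 if and only if λ(F(A)) = 0. -/

import Mathlib

open MeasureTheory Set Pointwise

noncomputable def pc (a b u v p x : ℝ) : ℝ :=
  if x ≤ (a+b)/2 then u + (x - a) * (2*(p - u)/(b - a)) else v + (x - b) * (2*(v - p)/(b - a))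

noncomputable def pk (u v d : ℝ) : ℝ :=
  if u = v then (if u ≤ 1/2 then u + min d 1 / 2 else u - min d 1 / 2) else (u+v)/2

lemma pk_mem {u v d : ℝ} (hu : u ∈ Icc (0:ℝ) 1) (hv : v ∈ Icc (0:ℝ) 1) (hd : 0 < d) :
    pk u v d ∈ Icc (0:ℝ) 1 := by
  obtain ⟨hu0, hu1⟩ := hu; obtain ⟨hv0, hv1⟩ := hv
  have h1 : min d 1 ≤ 1 := min_le_right _ _
  have h2 : 0 < min d 1 := lt_min hd one_pos
  unfold pk
  split_ifs with h h' <;> constructor <;> nlinarith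

lemma pk_ne_left {u v d : ℝ} (hd : 0 < d) : pk u v d ≠ u := by
  have h2 : 0 < min d 1 := lt_min hd one_pos
  unfold pk
  split_ifs with h h' <;> intro hc <;> [skip; skip; exact h (by linarith)] <;> nlinarith

lemma pk_ne_right {u v d : ℝ} (hd : 0 < d) : pk u v d ≠ v := by
  have h2 : 0 < min d 1 := lt_min hd one_pos
  unfold pk
  split_ifs with h h' <;> intro hc <;> [skip; skip; exact h (by linarith)] <;> nlinarith

lemma pk_dist_left {u v d : ℝ} (hd : 0 < d) : |pk u v d - u| ≤ (|v - u| + d)/2 := by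
  have h2 : min d 1 ≤ d := min_le_left _ _
  have h3 : 0 < min d 1 := lt_min hd one_pos
  have h4 : 0 ≤ |v - u| := abs_nonneg _
  unfold pk
  split_ifs with h h' <;> rw [abs_le] <;> constructor <;>
    [skip; skip; skip; skip; skip; skip] <;>
    cases' abs_cases (v - u) with hc hc <;> nlinarith [abs_nonneg (v-u)]

lemma pk_dist_right {u v d : ℝ} (hd : 0 < d) : |pk u v d - v| ≤ (|v - u| + d)/2 := by
  have h2 : min d 1 ≤ d := min_le_left _ _
  have h3 : 0 < min d 1 := lt_min hd one_pos
  unfold pk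
  split_ifs with h h' <;> rw [abs_le] <;> constructor <;>
    cases' abs_cases (v - u) with hc hc <;> nlinarith [abs_nonneg (v-u)]

lemma pc_cont {a b : ℝ} (hab : a < b) (u v p : ℝ) : Continuous (pc a b u v p) := by
  unfold pc
  apply Continuous.if_le (by fun_prop) (by fun_prop) continuous_id continuous_const
  intro x hx
  subst hx
  have : b - a ≠ 0 := by linarith
  field_simp
  ring

lemma pc_mem {a b u v p x : ℝ} (hab : a < b) (hu : u ∈ Icc (0:ℝ) 1) (hv : v ∈ Icc (0:ℝ) 1)
    (hp : p ∈ Icc (0:ℝ) 1) (hx : x ∈ Icc a b) : pc a b u v p x ∈ Icc (0:ℝ) 1 := by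
  obtain ⟨hu0, hu1⟩ := hu; obtain ⟨hv0, hv1⟩ := hv; obtain ⟨hp0, hp1⟩ := hp
  obtain ⟨hx1, hx2⟩ := hx
  have hba : (0:ℝ) < b - a := by linarith
  have hinv : (b - a) * (b - a)⁻¹ = 1 := mul_inv_cancel₀ (by linarith)
  have hinvpos : (0:ℝ) < (b-a)⁻¹ := inv_pos.mpr hba
  have ht0 : 0 ≤ 2*(x-a)*(b-a)⁻¹ := mul_nonneg (by linarith) hinvpos.le
  have hs0 : 0 ≤ 2*(b-x)*(b-a)⁻¹ := mul_nonneg (by linarith) hinvpos.le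
  unfold pc
  split_ifs with h
  · have e : u + (x - a) * (2 * (p - u) / (b - a))
        = u*(1 - 2*(x-a)*(b-a)⁻¹) + p*(2*(x-a)*(b-a)⁻¹) := by
      field_simp; ring
    have ht1 : 2*(x-a)*(b-a)⁻¹ ≤ 1 := by
      rw [← hinv]
      apply mul_le_mul_of_nonneg_right (by linarith) (le_of_lt hinvpos)
    rw [e]
    constructor <;> nlinarith [mul_nonneg hu0 (by linarith : (0:ℝ) ≤ 1 - 2*(x-a)*(b-a)⁻¹),
      mul_nonneg hp0 ht0, mul_le_one₀ hu1 (by linarith) (by linarith : (1:ℝ) - 2*(x-a)*(b-a)⁻¹ ≤ 1),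
      mul_le_one₀ hp1 ht0 ht1]
  · have e : v + (x - b) * (2 * (v - p) / (b - a))
        = v*(1 - 2*(b-x)*(b-a)⁻¹) + p*(2*(b-x)*(b-a)⁻¹) := by
      field_simp; ring
    have hs1 : 2*(b-x)*(b-a)⁻¹ ≤ 1 := by
      rw [← hinv]
      apply mul_le_mul_of_nonneg_right (by push_neg at h; linarith) (le_of_lt hinvpos)
    rw [e]
    constructor <;> nlinarith [mul_nonneg hv0 (by linarith : (0:ℝ) ≤ 1 - 2*(b-x)*(b-a)⁻¹),
      mul_nonneg hp0 hs0, mul_le_one₀ hv1 (by linarith) (by linarith : (1:ℝ) - 2*(b-x)*(b-a)⁻¹ ≤ 1),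
      mul_le_one₀ hp1 hs0 hs1]

-- on the left half, value is within `2*(x-a)/(b-a) * |p-u|` of `u`
lemma pc_left_est {a b u v p x : ℝ} (hab : a < b) (hx1 : a ≤ x) (hx2 : x ≤ (a+b)/2) :
    |pc a b u v p x - u| ≤ (2*(x - a)/(b - a)) * |p - u| := by
  have hba : (0:ℝ) < b - a := by linarith
  unfold pc
  rw [if_pos hx2]
  have : u + (x - a) * (2 * (p - u) / (b - a)) - u = (2*(x-a)/(b-a)) * (p - u) := by
    field_simp; ring
  rw [this, abs_mul, abs_of_nonneg (div_nonneg (by linarith) (by linarith))]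

lemma pc_right_est {a b u v p x : ℝ} (hab : a < b) (hx1 : (a+b)/2 ≤ x) (hx2 : x ≤ b) :
    |pc a b u v p x - v| ≤ (2*(b - x)/(b - a)) * |v - p| := by
  have hba : (0:ℝ) < b - a := by linarith
  unfold pc
  split_ifs with h
  ·
    have hx : x = (a+b)/2 := le_antisymm h hx1
    subst hx
    have h1 : u + ((a+b)/2 - a) * (2 * (p - u) / (b - a)) = p := by field_simp; ring
    rw [h1]
    have h2 : 2 * (b - (a+b)/2) / (b - a) = 1 := by field_simp; ring
    rw [h2, one_mul, abs_sub_comm]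
  · have : v + (x - b) * (2 * (v - p) / (b - a)) - v = -((2*(b-x)/(b-a)) * (v - p)) := by
      field_simp; ring
    rw [this, abs_neg, abs_mul, abs_of_nonneg (div_nonneg (by linarith) (by linarith))]

lemma pc_fac_left {a b x : ℝ} (hab : a < b) (hx : a ≤ x) (h : x ≤ (a+b)/2) :
    2*(x - a)/(b - a) ≤ 1 := by
  rw [div_le_one (by linarith)]; linarith

lemma pc_fac_right {a b x : ℝ} (hab : a < b) (hx : x ≤ b) (h : (a+b)/2 ≤ x) :
    2*(b - x)/(b - a) ≤ 1 := by
  rw [div_le_one (by linarith)]; linarith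

lemma affine_vol (c k : ℝ) (S : Set ℝ) :
    volume ((fun x => c + k * x) '' S) = ENNReal.ofReal |k| * volume S := by
  have h1 : (fun x => c + k * x) '' S = (fun y => y + c) '' (k • S) := by
    rw [← image_smul, image_image]
    simp [smul_eq_mul, add_comm]
  rw [h1, image_add_right, measure_preimage_add_right, Measure.addHaar_smul,
    Module.finrank_self, pow_one]

lemma affine_null {k : ℝ} (hk : k ≠ 0) (c : ℝ) (S : Set ℝ) :
    volume ((fun x => c + k * x) '' S) = 0 ↔ volume S = 0 := by
  rw [affine_vol, mul_eq_zero, or_iff_right]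
  rw [ENNReal.ofReal_eq_zero, not_le]
  exact abs_pos.mpr hk

lemma pc_null {a b u v p : ℝ} (hab : a < b) (hpu : p ≠ u) (hpv : p ≠ v) (S : Set ℝ) :
    volume (pc a b u v p '' S) = 0 ↔ volume S = 0 := by
  have hba : b - a ≠ 0 := sub_ne_zero.mpr hab.ne'
  set k1 := 2*(p - u)/(b - a) with hk1def
  set k2 := 2*(v - p)/(b - a) with hk2def
  have hk1 : k1 ≠ 0 := div_ne_zero (mul_ne_zero two_ne_zero (sub_ne_zero.mpr hpu)) hba
  have hk2 : k2 ≠ 0 := div_ne_zero (mul_ne_zero two_ne_zero (sub_ne_zero.mpr (Ne.symm hpv))) hba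
  set m := (a+b)/2
  have hsplit : S = (S ∩ Iic m) ∪ (S \ Iic m) := (inter_union_diff S (Iic m)).symm
  have himg : pc a b u v p '' S
      = (fun x => (u - a*k1) + k1 * x) '' (S ∩ Iic m) ∪
        (fun x => (v - b*k2) + k2 * x) '' (S \ Iic m) := by
    conv_lhs => rw [hsplit]
    rw [image_union]
    congr 1
    · apply image_congr
      intro x hx
      rw [pc, if_pos (mem_Iic.mp hx.2)]
      ring
    · apply image_congr
      intro x hx
      rw [pc, if_neg (fun h => hx.2 (mem_Iic.mpr h))]
      ring
  rw [himg, measure_union_null_iff, affine_null hk1, affine_null hk2]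
  conv_rhs => rw [hsplit]
  rw [measure_union_null_iff]

lemma abs_sub_le_one_Icc {u p : ℝ} (hu : u ∈ Icc (0:ℝ) 1) (hp : p ∈ Icc (0:ℝ) 1) :
    |p - u| ≤ 1 := by
  rw [abs_le]; constructor <;> [linarith [hu.2, hp.1]; linarith [hu.1, hp.2]]

set_option maxHeartbeats 2000000 in
/-- Tietze-type extension preserving the Lusin null-set condition in both directions. -/
theorem extension_preserving_null_condition
    (E : Set ℝ) (hE_ne : E.Nonempty) (hE_closed : IsClosed E)
    (hE_sub : E ⊆ Icc (0:ℝ) 1) (hE_proper : E ≠ Icc (0:ℝ) 1)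
    (f : ℝ → ℝ) (hf_cont : ContinuousOn f E) (hf_maps : MapsTo f E (Icc (0:ℝ) 1))
    (hf_null : ∀ A ⊆ E, MeasurableSet A → (volume A = 0 ↔ volume (f '' A) = 0)) :
    ∃ F : ℝ → ℝ, ContinuousOn F (Icc (0:ℝ) 1) ∧ MapsTo F (Icc (0:ℝ) 1) (Icc (0:ℝ) 1) ∧
      EqOn F f E ∧
      ∀ A ⊆ Icc (0:ℝ) 1, MeasurableSet A → (volume A = 0 ↔ volume (F '' A) = 0) := by
  classical
  set E' : Set ℝ := insert (-1) (insert 2 E) with hE'def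
  have hE'c : IsClosed E' := by
    have : E' = {-1} ∪ ({2} ∪ E) := by rw [hE'def, insert_eq, insert_eq]
    rw [this]
    exact isClosed_singleton.union (isClosed_singleton.union hE_closed)
  have hEE' : E ⊆ E' := fun z hz => mem_insert_of_mem _ (mem_insert_of_mem _ hz)
  have hE'bd : ∀ z ∈ E', -1 ≤ z ∧ z ≤ 2 := by
    intro z hz
    rcases hz with rfl | hz
    · norm_num
    rcases hz with rfl | hz
    · norm_num
    · have := hE_sub hz; exact ⟨by linarith [this.1], by linarith [this.2]⟩
  have hE'E : ∀ z ∈ E', -1 < z → z < 2 → z ∈ E := by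
    intro z hz h1 h2
    rcases hz with rfl | hz
    · exact absurd rfl h1.ne'
    rcases hz with rfl | hz
    · exact absurd rfl h2.ne
    · exact hz
  have hnotE' : ∀ x ∈ Icc (0:ℝ) 1, x ∉ E → x ∉ E' := by
    intro x hx hxE hxE'
    rcases hxE' with rfl | hxE'
    · linarith [hx.1]
    rcases hxE' with rfl | hxE'
    · linarith [hx.2]
    · exact hxE hxE'
  set g : ℝ → ℝ := fun z => if z ∈ E then f z else (1/2 : ℝ) with hgdef
  have hg_mem : ∀ z, g z ∈ Icc (0:ℝ) 1 := by
    intro z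
    simp only [hgdef]
    split_ifs with h
    · exact hf_maps h
    · norm_num
  set la : ℝ → ℝ := fun z => sSup (E' ∩ Iic z) with hladef
  set rb : ℝ → ℝ := fun z => sInf (E' ∩ Ici z) with hrbdef
  -- gap structure
  have key : ∀ x : ℝ, -1 ≤ x → x ≤ 2 → x ∉ E' →
      la x ∈ E' ∧ rb x ∈ E' ∧ la x < x ∧ x < rb x ∧
      (∀ z ∈ Ioo (la x) (rb x), z ∉ E') ∧
      (∀ y ∈ Ioo (la x) (rb x), la y = la x ∧ rb y = rb x) := by
    intro x hx1 hx2 hxE'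
    have hne1 : (E' ∩ Iic x).Nonempty := ⟨-1, mem_insert _ _, mem_Iic.mpr hx1⟩
    have hne2 : (E' ∩ Ici x).Nonempty :=
      ⟨2, mem_insert_of_mem _ (mem_insert _ _), mem_Ici.mpr hx2⟩
    have hbdd1 : BddAbove (E' ∩ Iic x) := ⟨x, fun z hz => hz.2⟩
    have hbdd2 : BddBelow (E' ∩ Ici x) := ⟨x, fun z hz => hz.2⟩
    have hla : la x ∈ E' ∩ Iic x :=
      (hE'c.inter isClosed_Iic).csSup_mem hne1 hbdd1
    have hrb : rb x ∈ E' ∩ Ici x :=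
      (hE'c.inter isClosed_Ici).csInf_mem hne2 hbdd2
    have hlax : la x < x := lt_of_le_of_ne hla.2 (fun h => hxE' (h ▸ hla.1))
    have hxrb : x < rb x := lt_of_le_of_ne hrb.2 (fun h => hxE' (h ▸ hrb.1))
    have hempty : ∀ z ∈ Ioo (la x) (rb x), z ∉ E' := by
      intro z hz hzE'
      rcases le_or_gt z x with h | h
      · exact absurd (le_csSup hbdd1 ⟨hzE', mem_Iic.mpr h⟩) (not_le.mpr hz.1)
      · exact absurd (csInf_le hbdd2 ⟨hzE', mem_Ici.mpr h.le⟩) (not_le.mpr hz.2)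
    refine ⟨hla.1, hrb.1, hlax, hxrb, hempty, ?_⟩
    intro y hy
    constructor
    · have h1 : E' ∩ Iic y = E' ∩ Iic (la x) := by
        ext z
        constructor
        · rintro ⟨hzE', hzy⟩
          refine ⟨hzE', mem_Iic.mpr ?_⟩
          by_contra hcon
          push_neg at hcon
          exact hempty z ⟨hcon, lt_of_le_of_lt (mem_Iic.mp hzy) hy.2⟩ hzE'
        · rintro ⟨hzE', hzy⟩
          exact ⟨hzE', mem_Iic.mpr (le_trans (mem_Iic.mp hzy) hy.1.le)⟩
      show sSup (E' ∩ Iic y) = la x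
      rw [h1]
      exact IsGreatest.csSup_eq ⟨⟨hla.1, mem_Iic.mpr le_rfl⟩, fun z hz => mem_Iic.mp hz.2⟩
    · have h2 : E' ∩ Ici y = E' ∩ Ici (rb x) := by
        ext z
        constructor
        · rintro ⟨hzE', hzy⟩
          refine ⟨hzE', mem_Ici.mpr ?_⟩
          by_contra hcon
          push_neg at hcon
          exact hempty z ⟨lt_of_lt_of_le hy.1 (mem_Ici.mp hzy), hcon⟩ hzE'
        · rintro ⟨hzE', hzy⟩
          exact ⟨hzE', mem_Ici.mpr (le_trans hy.2.le (mem_Ici.mp hzy))⟩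
      show sInf (E' ∩ Ici y) = rb x
      rw [h2]
      exact IsLeast.csInf_eq ⟨⟨hrb.1, mem_Ici.mpr le_rfl⟩, fun z hz => mem_Ici.mp hz.2⟩
  -- the extension
  set F : ℝ → ℝ := fun x => if x ∈ E then f x else
    pc (la x) (rb x) (g (la x)) (g (rb x)) (pk (g (la x)) (g (rb x)) (rb x - la x)) x with hFdef
  have hFE : EqOn F f E := by
    intro x hx
    simp only [hFdef, if_pos hx]
  have hF_gap : ∀ x ∉ E, F x =
      pc (la x) (rb x) (g (la x)) (g (rb x)) (pk (g (la x)) (g (rb x)) (rb x - la x)) x := by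
    intro x hx
    simp only [hFdef, if_neg hx]
  have hgf : ∀ z ∈ E, g z = f z := by
    intro z hz
    simp only [hgdef, if_pos hz]
  have hF_maps : MapsTo F (Icc (0:ℝ) 1) (Icc (0:ℝ) 1) := by
    intro x hx
    by_cases hxE : x ∈ E
    · rw [hFE hxE]; exact hf_maps hxE
    · have hx' := hnotE' x hx hxE
      obtain ⟨h1, h2, h3, h4, h5, h6⟩ := key x (by linarith [hx.1]) (by linarith [hx.2]) hx'
      rw [hF_gap x hxE]
      have hd : 0 < rb x - la x := by linarith
      exact pc_mem (by linarith) (hg_mem _) (hg_mem _)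
        (pk_mem (hg_mem _) (hg_mem _) hd) ⟨h3.le, h4.le⟩
  have hF_cont : ContinuousOn F (Icc (0:ℝ) 1) := by
    intro x hx
    by_cases hxE : x ∈ E
    · -- the hard case : x in E
      rw [Metric.continuousWithinAt_iff]
      intro ε hε
      obtain ⟨δ₁, hδ₁pos, hδ₁⟩ :=
        Metric.continuousWithinAt_iff.mp (hf_cont x hxE) (ε/4) (by positivity)
      set δ₂ := min δ₁ (min (ε/4) (1/4)) with hδ₂def
      have hδ₂pos : 0 < δ₂ := lt_min hδ₁pos (lt_min (by positivity) (by norm_num))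
      have hδ₂a : δ₂ ≤ δ₁ := min_le_left _ _
      have hδ₂b : δ₂ ≤ ε/4 := le_trans (min_le_right _ _) (min_le_left _ _)
      have hδ₂c : δ₂ ≤ 1/4 := le_trans (min_le_right _ _) (min_le_right _ _)
      have hfc : ∀ z ∈ E, |z - x| < δ₂ → |f z - f x| < ε/4 := by
        intro z hz hd
        have := hδ₁ hz (by rw [Real.dist_eq]; exact lt_of_lt_of_le hd hδ₂a)
        rwa [Real.dist_eq] at this
      refine ⟨min (δ₂/4) (δ₂*ε/16), by positivity, ?_⟩
      intro y hy hdist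
      set δ := min (δ₂/4) (δ₂*ε/16) with hδdef
      have hδpos : 0 < δ := by positivity
      have hδ4 : δ ≤ δ₂/4 := min_le_left _ _
      have hδε : δ ≤ δ₂*ε/16 := min_le_right _ _
      rw [Real.dist_eq] at hdist
      rw [Real.dist_eq, hFE hxE]
      by_cases hyE : y ∈ E
      · rw [hFE hyE]
        have : |y - x| < δ₂ := lt_of_lt_of_le hdist (by linarith)
        linarith [hfc y hyE this]
      · have hy' := hnotE' y hy hyE
        obtain ⟨ha, hb, h3, h4, h5, h6⟩ := key y (by linarith [hy.1]) (by linarith [hy.2]) hy'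
        set a := la y with hadef
        set b := rb y with hbdef
        set u := g a with hu
        set v := g b with hv
        set p := pk u v (b - a) with hp
        have hd0 : 0 < b - a := by linarith
        have hum := hg_mem a
        have hvm := hg_mem b
        have hpm : p ∈ Icc (0:ℝ) 1 := pk_mem hum hvm hd0
        have hpu1 : |p - u| ≤ 1 := abs_sub_le_one_Icc hum hpm
        have hpv1 : |v - p| ≤ 1 := by rw [abs_sub_comm]; exact abs_sub_le_one_Icc hvm hpm
        rw [hF_gap y hyE]
        have habs := abs_lt.mp hdist
        have hεδ : (0:ℝ) ≤ δ₂*ε := by positivity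
        -- unified treatment of the case where both endpoints are close to x
        have main_near : |u - f x| < ε/4 → |v - f x| < ε/4 → b - a < δ₂ →
            |pc a b u v p y - f x| < ε := by
          intro hau hbv hba2
          have hvu : |v - u| < ε/2 := by
            have h1 : |v - u| ≤ |v - f x| + |f x - u| := abs_sub_le v (f x) u
            rw [abs_sub_comm (f x) u] at h1
            linarith
          have hpu : |p - u| ≤ (|v - u| + (b - a))/2 := pk_dist_left hd0
          have hpv : |p - v| ≤ (|v - u| + (b - a))/2 := pk_dist_right hd0
          rcases le_or_gt y ((a+b)/2) with hym | hym
          · have hest := pc_left_est (u := u) (v := v) (p := p) (show a < b by linarith) h3.le hym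
            have ht0 : (0:ℝ) ≤ 2*(y-a)/(b-a) := div_nonneg (by linarith) (by linarith)
            have ht1 : 2*(y-a)/(b-a) ≤ 1 := pc_fac_left (show a < b by linarith) h3.le hym
            have h8 : |pc a b u v p y - u| ≤ |p - u| := by
              nlinarith [abs_nonneg (p - u)]
            have h9 : |pc a b u v p y - f x| ≤ |pc a b u v p y - u| + |u - f x| :=
              abs_sub_le _ u _
            linarith
          · have hest := pc_right_est (u := u) (v := v) (p := p) (show a < b by linarith) hym.le h4.le
            have ht0 : (0:ℝ) ≤ 2*(b-y)/(b-a) := div_nonneg (by linarith) (by linarith)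
            have ht1 : 2*(b-y)/(b-a) ≤ 1 := pc_fac_right (show a < b by linarith) h4.le hym.le
            have h8 : |pc a b u v p y - v| ≤ |v - p| := by
              nlinarith [abs_nonneg (v - p)]
            have h9 : |pc a b u v p y - f x| ≤ |pc a b u v p y - v| + |v - f x| :=
              abs_sub_le _ v _
            rw [abs_sub_comm v p] at h8
            linarith
        have hxgap : x ≤ a ∨ b ≤ x := by
          by_contra hcon
          push_neg at hcon
          exact h5 x ⟨hcon.1, hcon.2⟩ (hEE' hxE)
        rcases hxgap with hxa | hbx
        · -- x ≤ a < y
          have hay : a < y := h3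
          have haE : a ∈ E := hE'E a ha (by linarith [hx.1]) (by linarith [hy.2])
          have hau : |u - f x| < ε/4 := by
            rw [hu, hgf a haE]
            exact hfc a haE (by rw [abs_of_nonneg (by linarith)]; linarith)
          rcases lt_or_ge (b - x) δ₂ with hnear | hfar
          · have hbE : b ∈ E := hE'E b hb (by linarith [hy.1]) (by linarith [hx.2])
            have hbv : |v - f x| < ε/4 := by
              rw [hv, hgf b hbE]
              exact hfc b hbE (by rw [abs_of_nonneg (by linarith)]; linarith)
            exact main_near hau hbv (by linarith)
          · have hba : 3*δ₂/4 ≤ b - a := by linarith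
            have hym : y ≤ (a+b)/2 := by linarith
            have hest := pc_left_est (u := u) (v := v) (p := p) (show a < b by linarith) h3.le hym
            have ht0 : (0:ℝ) ≤ 2*(y-a)/(b-a) := div_nonneg (by linarith) (by linarith)
            have h2 : 2*(y-a)/(b-a) ≤ ε/4 := by
              rw [div_le_iff₀ (show (0:ℝ) < b - a by linarith)]
              have hprod := mul_le_mul_of_nonneg_left hba (show (0:ℝ) ≤ ε/4 by positivity)
              have hya : y - a < δ₂*ε/16 := by linarith
              nlinarith
            have h8 : |pc a b u v p y - u| ≤ ε/4 := by
              nlinarith [abs_nonneg (p - u)]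
            have h9 : |pc a b u v p y - f x| ≤ |pc a b u v p y - u| + |u - f x| :=
              abs_sub_le _ u _
            linarith
        · -- y < b ≤ x
          have hyb : y < b := h4
          have hbE : b ∈ E := hE'E b hb (by linarith [hy.1]) (by linarith [hx.2])
          have hbv : |v - f x| < ε/4 := by
            rw [hv, hgf b hbE]
            exact hfc b hbE (by rw [abs_of_nonpos (by linarith), neg_sub]; linarith)
          rcases lt_or_ge (x - a) δ₂ with hnear | hfar
          · have haE : a ∈ E := hE'E a ha (by linarith [hx.1]) (by linarith [hy.2])
            have hau : |u - f x| < ε/4 := by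
              rw [hu, hgf a haE]
              exact hfc a haE (by rw [abs_of_nonpos (by linarith), neg_sub]; linarith)
            exact main_near hau hbv (by linarith)
          · have hba : 3*δ₂/4 ≤ b - a := by linarith
            have hym : (a+b)/2 ≤ y := by linarith
            have hest := pc_right_est (u := u) (v := v) (p := p) (show a < b by linarith) hym h4.le
            have ht0 : (0:ℝ) ≤ 2*(b-y)/(b-a) := div_nonneg (by linarith) (by linarith)
            have h2 : 2*(b-y)/(b-a) ≤ ε/4 := by
              rw [div_le_iff₀ (show (0:ℝ) < b - a by linarith)]
              have hprod := mul_le_mul_of_nonneg_left hba (show (0:ℝ) ≤ ε/4 by positivity)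
              have hyb2 : b - y < δ₂*ε/16 := by linarith
              nlinarith
            have h8 : |pc a b u v p y - v| ≤ ε/4 := by
              nlinarith [abs_nonneg (v - p)]
            have h9 : |pc a b u v p y - f x| ≤ |pc a b u v p y - v| + |v - f x| :=
              abs_sub_le _ v _
            linarith
    · -- easy case : x in a gap
      have hx' := hnotE' x hx hxE
      obtain ⟨h1, h2, h3, h4, h5, h6⟩ := key x (by linarith [hx.1]) (by linarith [hx.2]) hx'
      apply ContinuousAt.continuousWithinAt
      have hcpc : ContinuousAt
          (pc (la x) (rb x) (g (la x)) (g (rb x)) (pk (g (la x)) (g (rb x)) (rb x - la x))) x :=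
        (pc_cont (lt_trans h3 h4) _ _ _).continuousAt
      apply hcpc.congr
      filter_upwards [Ioo_mem_nhds h3 h4] with y hy
      have hyE : y ∉ E := fun h => h5 y hy (hEE' h)
      rw [hF_gap y hyE, (h6 y hy).1, (h6 y hy).2]
  refine ⟨F, hF_cont, hF_maps, hFE, ?_⟩
  intro A hA hAm
  set I : ℚ → Set ℝ := fun q =>
    if ((q:ℝ) ∉ E' ∧ -1 ≤ (q:ℝ) ∧ (q:ℝ) ≤ 2) then Ioo (la q) (rb q) else ∅ with hIdef
  have hcover : ∀ x ∈ A, x ∉ E → x ∈ ⋃ q : ℚ, I q := by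
    intro x hxA hxE
    have hx := hA hxA
    have hx' := hnotE' x hx hxE
    obtain ⟨ha, hb, h3, h4, h5, h6⟩ := key x (by linarith [hx.1]) (by linarith [hx.2]) hx'
    obtain ⟨q, hq1, hq2⟩ := exists_rat_btwn h3
    have hqgap : (q:ℝ) ∈ Ioo (la x) (rb x) := ⟨hq1, lt_trans hq2 h4⟩
    have hqE' : (q:ℝ) ∉ E' := h5 _ hqgap
    have hqb : -1 ≤ (q:ℝ) := le_trans (hE'bd _ ha).1 hq1.le
    have hqc : (q:ℝ) ≤ 2 := by linarith [hx.2]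
    refine mem_iUnion.mpr ⟨q, ?_⟩
    show x ∈ I q
    simp only [hIdef]
    rw [if_pos ⟨hqE', hqb, hqc⟩, (h6 _ hqgap).1, (h6 _ hqgap).2]
    exact ⟨h3, h4⟩
  have hgap_iff : ∀ q : ℚ, (volume (F '' (A ∩ I q)) = 0 ↔ volume (A ∩ I q) = 0) := by
    intro q
    by_cases hcond : ((q:ℝ) ∉ E' ∧ -1 ≤ (q:ℝ) ∧ (q:ℝ) ≤ 2)
    · have hIq : I q = Ioo (la q) (rb q) := by simp only [hIdef]; rw [if_pos hcond]
      obtain ⟨ha, hb, h3, h4, h5, h6⟩ := key q hcond.2.1 hcond.2.2 hcond.1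
      have hd0 : (0:ℝ) < rb (q:ℝ) - la (q:ℝ) := by linarith
      have hEq : EqOn F (pc (la (q:ℝ)) (rb (q:ℝ)) (g (la (q:ℝ))) (g (rb (q:ℝ)))
          (pk (g (la (q:ℝ))) (g (rb (q:ℝ))) (rb (q:ℝ) - la (q:ℝ)))) (I q) := by
        intro y hy
        rw [hIq] at hy
        have hyE : y ∉ E := fun h => h5 y hy (hEE' h)
        rw [hF_gap y hyE, (h6 y hy).1, (h6 y hy).2]
      rw [(hEq.mono inter_subset_right).image_eq]
      exact pc_null (by linarith) (pk_ne_left hd0) (pk_ne_right hd0) _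
    · have : I q = ∅ := by simp only [hIdef]; rw [if_neg hcond]
      simp [this]
  have hsplit : A ⊆ (A ∩ E) ∪ ⋃ q : ℚ, (A ∩ I q) := by
    intro x hxA
    by_cases hxE : x ∈ E
    · exact Or.inl ⟨hxA, hxE⟩
    · obtain ⟨q, hq⟩ := mem_iUnion.mp (hcover x hxA hxE)
      exact Or.inr (mem_iUnion.mpr ⟨q, hxA, hq⟩)
  have hAEm : MeasurableSet (A ∩ E) := hAm.inter hE_closed.measurableSet
  have hAE_iff := hf_null (A ∩ E) inter_subset_right hAEm
  have hFimg : F '' (A ∩ E) = f '' (A ∩ E) := (hFE.mono inter_subset_right).image_eq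
  constructor
  · intro h0
    have himg : F '' A ⊆ F '' (A ∩ E) ∪ ⋃ q : ℚ, F '' (A ∩ I q) := by
      rintro z ⟨w, hw, rfl⟩
      rcases hsplit hw with h | h
      · exact Or.inl ⟨w, h, rfl⟩
      · obtain ⟨q, hq⟩ := mem_iUnion.mp h
        exact Or.inr (mem_iUnion.mpr ⟨q, w, hq, rfl⟩)
    apply measure_mono_null himg
    rw [measure_union_null_iff]
    refine ⟨?_, measure_iUnion_null fun q => ?_⟩
    · rw [hFimg]
      exact hAE_iff.mp (measure_mono_null inter_subset_left h0)
    · exact (hgap_iff q).mpr (measure_mono_null inter_subset_left h0)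
  · intro h0
    apply measure_mono_null hsplit
    rw [measure_union_null_iff]
    refine ⟨?_, measure_iUnion_null fun q => ?_⟩
    · apply hAE_iff.mpr
      rw [← hFimg]
      exact measure_mono_null (image_mono inter_subset_left) h0
    · exact (hgap_iff q).mp (measure_mono_null (image_mono inter_subset_left) h0)
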